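/- Let G = (V,E) be a finite simple graph with no isolated vertices, and let E be partitioned into two disjoint nonempty sets B and C with B ∪ C = E (so that ∂B = ∂C). Then the domination number γ(G) equals the minimum, over all pairs of colorings c₁ : ∂B → {black, white, grey} and c₂ : ∂C → {black, white, grey} such that for every u ∈ ∂B exactly one of the following holds: c₁(u) = c₂(u) = black, or (c₁(u) = white and c₂(u) = grey), or (c₁(u) = grey and c₂(u) = white), of the quantity A_B(c₁) + A_C(c₂) − #black(∂B, c₁), where #black(∂B, c₁) is the number of vertices of ∂B colored black by c₁. -/
import Mathlib


/-- `V(S)`: the set of vertices incident to some edge of `S`. -/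
def incVerts {V : Type*} (S : Set (Sym2 V)) : Set V :=
  {v | ∃ e ∈ S, v ∈ e}

/-- The boundary `∂S` of an edge set `S ⊆ E(G)`: vertices incident both to an edge of `S`
and to an edge of `E(G) \ S`. -/
def bdry {V : Type*} (G : SimpleGraph V) (S : Set (Sym2 V)) : Set V :=
  {v | (∃ e ∈ S, v ∈ e) ∧ ∃ e ∈ G.edgeSet \ S, v ∈ e}

/-- `D` is a dominating set of `G`: every vertex not in `D` is adjacent to a vertex of `D`. -/
def IsDominating {V : Type*} (G : SimpleGraph V) (D : Set V) : Prop :=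
  ∀ v ∉ D, ∃ u ∈ D, G.Adj v u

/-- The domination number `γ(G)` (as an element of `ℕ∞`). -/
noncomputable def dominationNumber {V : Type*} (G : SimpleGraph V) : ℕ∞ :=
  sInf {n : ℕ∞ | ∃ D : Set V, IsDominating G D ∧ n = D.ncard}

/-- The three colors used in the dynamic programming. -/
inductive Color
  | black
  | white
  | grey
deriving DecidableEq

/-- `D ⊆ V(F)` is a valid partial dominating set for the edge set `F` and the coloring
`c` of the boundary `∂F`: black boundary vertices are in `D`; white boundary vertices are
not in `D` but are joined by an edge of `F` to a vertex of `D`; grey boundary vertices are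
not in `D`; every non-boundary vertex of `V(F)` is in `D` or joined by an edge of `F` to a
vertex of `D`. -/
def ValidPartial {V : Type*} (G : SimpleGraph V) (F : Set (Sym2 V)) (c : V → Color)
    (D : Set V) : Prop :=
  D ⊆ incVerts F ∧
  (∀ v ∈ bdry G F, c v = Color.black → v ∈ D) ∧
  (∀ v ∈ bdry G F, c v = Color.white → v ∉ D ∧ ∃ u ∈ D, s(v, u) ∈ F) ∧
  (∀ v ∈ bdry G F, c v = Color.grey → v ∉ D) ∧
  (∀ v ∈ incVerts F, v ∉ bdry G F → v ∈ D ∨ ∃ u ∈ D, s(v, u) ∈ F)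

/-- `A_F(c) ∈ ℕ ∪ {∞}`: the minimum cardinality of a valid partial dominating set for `F`
and `c` (`∞` if none exists). -/
noncomputable def costA {V : Type*} (G : SimpleGraph V) (F : Set (Sym2 V))
    (c : V → Color) : ℕ∞ :=
  sInf {n : ℕ∞ | ∃ D : Set V, ValidPartial G F c D ∧ n = D.ncard}

/-- The number of vertices of `X` colored black by `c`. -/
noncomputable def nblack {V : Type*} (X : Set V) (c : V → Color) : ℕ :=
  (X ∩ {v | c v = Color.black}).ncard

private lemma enat_sInf_mem' {s : Set ℕ∞} (h : s.Nonempty) : sInf s ∈ s := by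
  obtain ⟨m, hm, hmin⟩ := wellFounded_lt.has_min s h
  have : sInf s = m :=
    le_antisymm (sInf_le hm) (le_sInf fun b hb => not_lt.1 (hmin b hb))
  rw [this]; exact hm

/-- for a finite simple graph with no isolated vertices whose edge set is
partitioned into disjoint nonempty parts `B` and `C` (so that `∂B = ∂C`), the domination
number equals the minimum of `A_B(c₁) + A_C(c₂) - #black(∂B, c₁)` over all pairs of
colorings `(c₁, c₂)` such that on each `u ∈ ∂B` exactly one of the following holds:
both colorings are black at `u`, or `c₁` is white and `c₂` grey at `u`, or `c₁` is grey
and `c₂` white at `u`. -/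
theorem dominationNumber_eq_root_recursion {V : Type*} [Fintype V] [DecidableEq V]
    (G : SimpleGraph V) (hiso : ∀ v : V, ∃ w, G.Adj v w)
    (B C : Set (Sym2 V)) (hBC : Disjoint B C) (hBne : B.Nonempty) (hCne : C.Nonempty)
    (hE : B ∪ C = G.edgeSet) :
    dominationNumber G =
      sInf {n : ℕ∞ | ∃ c₁ c₂ : V → Color,
        (∀ u ∈ bdry G B,
          (c₁ u = Color.black ∧ c₂ u = Color.black) ∨
          (c₁ u = Color.white ∧ c₂ u = Color.grey) ∨
          (c₁ u = Color.grey ∧ c₂ u = Color.white)) ∧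
        n = costA G B c₁ + costA G C c₂ - (nblack (bdry G B) c₁ : ℕ∞)} := by
  classical
  have hBsub : B ⊆ G.edgeSet := hE ▸ Set.subset_union_left
  have hCsub : C ⊆ G.edgeSet := hE ▸ Set.subset_union_right
  have hCB : G.edgeSet \ B = C := by
    ext e
    constructor
    · rintro ⟨he, hnb⟩
      rcases (hE ▸ he : e ∈ B ∪ C) with h | h
      · exact absurd h hnb
      · exact h
    · intro hc
      exact ⟨hCsub hc, fun hb => (Set.disjoint_left.mp hBC hb) hc⟩
  have hBc : G.edgeSet \ C = B := by
    ext e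
    constructor
    · rintro ⟨he, hnc⟩
      rcases (hE ▸ he : e ∈ B ∪ C) with h | h
      · exact h
      · exact absurd h hnc
    · intro hb
      exact ⟨hBsub hb, fun hc => (Set.disjoint_left.mp hBC hb) hc⟩
  have hbdryB : bdry G B = incVerts B ∩ incVerts C := by
    unfold bdry incVerts
    rw [hCB]
    rfl
  have hbdryC : bdry G C = incVerts B ∩ incVerts C := by
    unfold bdry incVerts
    rw [hBc]
    ext v
    exact ⟨fun ⟨h1, h2⟩ => ⟨h2, h1⟩, fun ⟨h1, h2⟩ => ⟨h2, h1⟩⟩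
  have hBCb : bdry G C = bdry G B := by rw [hbdryB, hbdryC]
  have hcover : ∀ v : V, v ∈ incVerts B ∪ incVerts C := by
    intro v
    obtain ⟨w, hw⟩ := hiso v
    have hmem : s(v, w) ∈ B ∪ C := hE ▸ (G.mem_edgeSet.mpr hw)
    rcases hmem with h | h
    · exact Or.inl ⟨s(v, w), h, Sym2.mem_mk_left _ _⟩
    · exact Or.inr ⟨s(v, w), h, Sym2.mem_mk_left _ _⟩
  apply le_antisymm
  · -- γ ≤ sInf RHS
    apply le_sInf
    rintro n ⟨c₁, c₂, hcompat, rfl⟩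
    by_cases h1 : costA G B c₁ = ⊤
    · rw [h1, top_add, ENat.top_sub_coe]
      exact le_top
    by_cases h2 : costA G C c₂ = ⊤
    · rw [h2, add_top, ENat.top_sub_coe]
      exact le_top
    have hne1 : {n : ℕ∞ | ∃ D : Set V, ValidPartial G B c₁ D ∧ n = D.ncard}.Nonempty := by
      by_contra h
      rw [Set.not_nonempty_iff_eq_empty] at h
      exact h1 (by unfold costA; rw [h, sInf_empty])
    have hne2 : {n : ℕ∞ | ∃ D : Set V, ValidPartial G C c₂ D ∧ n = D.ncard}.Nonempty := by
      by_contra h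
      rw [Set.not_nonempty_iff_eq_empty] at h
      exact h2 (by unfold costA; rw [h, sInf_empty])
    obtain ⟨D₁, hD₁, he₁⟩ := enat_sInf_mem' hne1
    obtain ⟨D₂, hD₂, he₂⟩ := enat_sInf_mem' hne2
    have hc₁ : costA G B c₁ = (D₁.ncard : ℕ∞) := he₁
    have hc₂ : costA G C c₂ = (D₂.ncard : ℕ∞) := he₂
    -- D₁ ∩ D₂ is the black set
    have hinter : D₁ ∩ D₂ = bdry G B ∩ {v | c₁ v = Color.black} := by
      ext v
      constructor
      · rintro ⟨hv1, hv2⟩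
        have hvb : v ∈ bdry G B := by
          rw [hbdryB]
          exact ⟨hD₁.1 hv1, hD₂.1 hv2⟩
        rcases hcompat v hvb with ⟨hb1, _⟩ | ⟨_, hg2⟩ | ⟨hg1, _⟩
        · exact ⟨hvb, hb1⟩
        · exact absurd hv2 (hD₂.2.2.2.1 v (hBCb ▸ hvb) hg2)
        · exact absurd hv1 (hD₁.2.2.2.1 v hvb hg1)
      · rintro ⟨hvb, hbl⟩
        have hc2b : c₂ v = Color.black := by
          rcases hcompat v hvb with ⟨_, h⟩ | ⟨h, _⟩ | ⟨h, _⟩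
          · exact h
          · exact absurd (hbl.symm.trans h) (by decide)
          · exact absurd (hbl.symm.trans h) (by decide)
        exact ⟨hD₁.2.1 v hvb hbl, hD₂.2.1 v (hBCb ▸ hvb) hc2b⟩
    -- D₁ ∪ D₂ dominates G
    have hdom : IsDominating G (D₁ ∪ D₂) := by
      intro v hv
      by_cases hb : v ∈ bdry G B
      · rcases hcompat v hb with ⟨hb1, _⟩ | ⟨hw1, _⟩ | ⟨_, hw2⟩
        · exact absurd (Or.inl (hD₁.2.1 v hb hb1)) hv
        · obtain ⟨_, u, huD, hedge⟩ := hD₁.2.2.1 v hb hw1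
          exact ⟨u, Or.inl huD, G.mem_edgeSet.mp (hBsub hedge)⟩
        · obtain ⟨_, u, huD, hedge⟩ := hD₂.2.2.1 v (hBCb ▸ hb) hw2
          exact ⟨u, Or.inr huD, G.mem_edgeSet.mp (hCsub hedge)⟩
      · rcases hcover v with hvB | hvC
        · rcases hD₁.2.2.2.2 v hvB hb with h | ⟨u, huD, hedge⟩
          · exact absurd (Or.inl h) hv
          · exact ⟨u, Or.inl huD, G.mem_edgeSet.mp (hBsub hedge)⟩
        · rcases hD₂.2.2.2.2 v hvC (hBCb ▸ hb) with h | ⟨u, huD, hedge⟩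
          · exact absurd (Or.inr h) hv
          · exact ⟨u, Or.inr huD, G.mem_edgeSet.mp (hCsub hedge)⟩
    have hγ : dominationNumber G ≤ ((D₁ ∪ D₂).ncard : ℕ∞) :=
      sInf_le ⟨D₁ ∪ D₂, hdom, rfl⟩
    have hk : nblack (bdry G B) c₁ = (D₁ ∩ D₂).ncard := by
      unfold nblack
      rw [hinter]
    have hie : (D₁ ∪ D₂).ncard + (D₁ ∩ D₂).ncard = D₁.ncard + D₂.ncard :=
      Set.ncard_union_add_ncard_inter D₁ D₂ (Set.toFinite _) (Set.toFinite _)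
    calc dominationNumber G ≤ ((D₁ ∪ D₂).ncard : ℕ∞) := hγ
      _ = costA G B c₁ + costA G C c₂ - (nblack (bdry G B) c₁ : ℕ∞) := by
          rw [hc₁, hc₂, hk, ← Nat.cast_add, ← ENat.coe_sub]
          exact congrArg _ (by omega)
  · -- sInf RHS ≤ γ
    apply le_sInf
    rintro m ⟨D, hD, rfl⟩
    set c₁ : V → Color := fun u =>
      if u ∈ D then Color.black
      else if ∃ w ∈ D, s(u, w) ∈ B then Color.white else Color.grey with hc₁def
    set c₂ : V → Color := fun u =>
      if u ∈ D then Color.black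
      else if ∃ w ∈ D, s(u, w) ∈ B then Color.grey else Color.white with hc₂def
    have hc1black : ∀ v, c₁ v = Color.black ↔ v ∈ D := by
      intro v
      by_cases h : v ∈ D
      · simp [hc₁def, h]
      · by_cases h2 : ∃ w ∈ D, s(v, w) ∈ B <;> simp [hc₁def, h, h2]
    have hc1white : ∀ v, c₁ v = Color.white ↔ (v ∉ D ∧ ∃ w ∈ D, s(v, w) ∈ B) := by
      intro v
      by_cases h : v ∈ D
      · simp [hc₁def, h]
      · by_cases h2 : ∃ w ∈ D, s(v, w) ∈ B <;> simp [hc₁def, h, h2]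
    have hc1grey : ∀ v, c₁ v = Color.grey ↔ (v ∉ D ∧ ¬∃ w ∈ D, s(v, w) ∈ B) := by
      intro v
      by_cases h : v ∈ D
      · simp [hc₁def, h]
      · by_cases h2 : ∃ w ∈ D, s(v, w) ∈ B <;> simp [hc₁def, h, h2]
    have hc2black : ∀ v, c₂ v = Color.black ↔ v ∈ D := by
      intro v
      by_cases h : v ∈ D
      · simp [hc₂def, h]
      · by_cases h2 : ∃ w ∈ D, s(v, w) ∈ B <;> simp [hc₂def, h, h2]
    have hc2white : ∀ v, c₂ v = Color.white ↔ (v ∉ D ∧ ¬∃ w ∈ D, s(v, w) ∈ B) := by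
      intro v
      by_cases h : v ∈ D
      · simp [hc₂def, h]
      · by_cases h2 : ∃ w ∈ D, s(v, w) ∈ B <;> simp [hc₂def, h, h2]
    have hc2grey : ∀ v, c₂ v = Color.grey ↔ (v ∉ D ∧ ∃ w ∈ D, s(v, w) ∈ B) := by
      intro v
      by_cases h : v ∈ D
      · simp [hc₂def, h]
      · by_cases h2 : ∃ w ∈ D, s(v, w) ∈ B <;> simp [hc₂def, h, h2]
    have hcompat : ∀ u ∈ bdry G B,
        (c₁ u = Color.black ∧ c₂ u = Color.black) ∨
        (c₁ u = Color.white ∧ c₂ u = Color.grey) ∨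
        (c₁ u = Color.grey ∧ c₂ u = Color.white) := by
      intro u _
      by_cases h : u ∈ D
      · exact Or.inl ⟨(hc1black u).mpr h, (hc2black u).mpr h⟩
      · by_cases h2 : ∃ w ∈ D, s(u, w) ∈ B
        · exact Or.inr (Or.inl ⟨(hc1white u).mpr ⟨h, h2⟩, (hc2grey u).mpr ⟨h, h2⟩⟩)
        · exact Or.inr (Or.inr ⟨(hc1grey u).mpr ⟨h, h2⟩, (hc2white u).mpr ⟨h, h2⟩⟩)
    have hvalid₁ : ValidPartial G B c₁ (D ∩ incVerts B) := by
      refine ⟨Set.inter_subset_right, ?_, ?_, ?_, ?_⟩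
      · intro v hv hb
        exact ⟨(hc1black v).mp hb, hv.1⟩
      · intro v hv hw
        obtain ⟨hvD, w, hwD, hwB⟩ := (hc1white v).mp hw
        exact ⟨fun h => hvD h.1,
          w, ⟨hwD, s(v, w), hwB, Sym2.mem_mk_right _ _⟩, hwB⟩
      · intro v hv hg
        exact fun h => ((hc1grey v).mp hg).1 h.1
      · intro v hvB hvnb
        by_cases hvD : v ∈ D
        · exact Or.inl ⟨hvD, hvB⟩
        · obtain ⟨w, hwD, hadj⟩ := hD v hvD
          have hmem : s(v, w) ∈ B ∪ C := hE ▸ (G.mem_edgeSet.mpr hadj)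
          rcases hmem with h | h
          · exact Or.inr ⟨w, ⟨hwD, s(v, w), h, Sym2.mem_mk_right _ _⟩, h⟩
          · exact absurd (hbdryB ▸ ⟨hvB, ⟨s(v, w), h, Sym2.mem_mk_left _ _⟩⟩ :
              v ∈ bdry G B) hvnb
    have hvalid₂ : ValidPartial G C c₂ (D ∩ incVerts C) := by
      refine ⟨Set.inter_subset_right, ?_, ?_, ?_, ?_⟩
      · intro v hv hb
        exact ⟨(hc2black v).mp hb, hv.1⟩
      · intro v hv hw
        obtain ⟨hvD, hnB⟩ := (hc2white v).mp hw
        obtain ⟨w, hwD, hadj⟩ := hD v hvD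
        have hmem : s(v, w) ∈ B ∪ C := hE ▸ (G.mem_edgeSet.mpr hadj)
        rcases hmem with h | h
        · exact absurd ⟨w, hwD, h⟩ hnB
        · exact ⟨fun hh => hvD hh.1,
            w, ⟨hwD, s(v, w), h, Sym2.mem_mk_right _ _⟩, h⟩
      · intro v hv hg
        exact fun h => ((hc2grey v).mp hg).1 h.1
      · intro v hvC hvnb
        by_cases hvD : v ∈ D
        · exact Or.inl ⟨hvD, hvC⟩
        · obtain ⟨w, hwD, hadj⟩ := hD v hvD
          have hmem : s(v, w) ∈ B ∪ C := hE ▸ (G.mem_edgeSet.mpr hadj)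
          rcases hmem with h | h
          · exact absurd (hbdryC ▸ ⟨⟨s(v, w), h, Sym2.mem_mk_left _ _⟩, hvC⟩ :
              v ∈ bdry G C) hvnb
          · exact Or.inr ⟨w, ⟨hwD, s(v, w), h, Sym2.mem_mk_right _ _⟩, h⟩
    have hcost₁ : costA G B c₁ ≤ ((D ∩ incVerts B).ncard : ℕ∞) :=
      sInf_le ⟨D ∩ incVerts B, hvalid₁, rfl⟩
    have hcost₂ : costA G C c₂ ≤ ((D ∩ incVerts C).ncard : ℕ∞) :=
      sInf_le ⟨D ∩ incVerts C, hvalid₂, rfl⟩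
    have hkset : bdry G B ∩ {v | c₁ v = Color.black} = (D ∩ incVerts B) ∩ (D ∩ incVerts C) := by
      ext v
      constructor
      · rintro ⟨hvb, hbl⟩
        have hvD : v ∈ D := (hc1black v).mp hbl
        have := hbdryB ▸ hvb
        exact ⟨⟨hvD, this.1⟩, ⟨hvD, this.2⟩⟩
      · rintro ⟨⟨hvD, hvB⟩, ⟨_, hvC⟩⟩
        exact ⟨hbdryB ▸ ⟨hvB, hvC⟩, (hc1black v).mpr hvD⟩
    have hunion : (D ∩ incVerts B) ∪ (D ∩ incVerts C) = D := by
      ext v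
      constructor
      · rintro (⟨h, _⟩ | ⟨h, _⟩) <;> exact h
      · intro h
        rcases hcover v with hB' | hC'
        · exact Or.inl ⟨h, hB'⟩
        · exact Or.inr ⟨h, hC'⟩
    have hie : D.ncard + ((D ∩ incVerts B) ∩ (D ∩ incVerts C)).ncard
        = (D ∩ incVerts B).ncard + (D ∩ incVerts C).ncard := by
      have := Set.ncard_union_add_ncard_inter (D ∩ incVerts B) (D ∩ incVerts C)
        (Set.toFinite _) (Set.toFinite _)
      rw [hunion] at this
      exact this
    have hkval : nblack (bdry G B) c₁ = ((D ∩ incVerts B) ∩ (D ∩ incVerts C)).ncard := by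
      unfold nblack
      rw [hkset]
    refine le_trans (sInf_le ⟨c₁, c₂, hcompat, rfl⟩) ?_
    calc costA G B c₁ + costA G C c₂ - (nblack (bdry G B) c₁ : ℕ∞)
        ≤ ((D ∩ incVerts B).ncard : ℕ∞) + ((D ∩ incVerts C).ncard : ℕ∞)
            - (nblack (bdry G B) c₁ : ℕ∞) :=
          tsub_le_tsub_right (add_le_add hcost₁ hcost₂) _
      _ = (D.ncard : ℕ∞) := by
          rw [hkval, ← Nat.cast_add, ← ENat.coe_sub]
          exact congrArg _ (by omega)
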